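/- For integers 2 ≤ k ≤ c ≤ n/k with c dividing n, the ratio h/b := [c·binom(n/c, k)] / [(n/c)^k · binom(c, k)] satisfies h/b ≤ 1/(k−1)! ≤ 1. -/

import Mathlib

/-- For integers `2 ≤ k ≤ c ≤ n/k` with `c ∣ n`, the ratio
`h/b = [c·C(n/c,k)] / [(n/c)^k·C(c,k)]` is at most `1/(k-1)!`, which is at most `1`. -/
theorem stmt_2 (n c k : ℕ) (hk : 2 ≤ k) (hkc : k ≤ c) (hcn : k * c ≤ n) (hdvd : c ∣ n) :
    ((c : ℝ) * ((n / c).choose k)) / (((n / c : ℕ) : ℝ) ^ k * (c.choose k)) ≤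
        1 / ((k - 1).factorial : ℝ) ∧
      (1 : ℝ) / ((k - 1).factorial : ℝ) ≤ 1 := by
  have hc0 : 0 < c := by omega
  set m := n / c with hm
  have hkm : k ≤ m := (Nat.le_div_iff_mul_le hc0).mpr hcn
  -- key nat inequality
  have hfk : k.factorial = k * (k - 1).factorial :=
    (Nat.mul_factorial_pred (by omega)).symm
  have h1 : m.choose k * k.factorial ≤ m ^ k := by
    rw [Nat.mul_comm, ← Nat.descFactorial_eq_factorial_mul_choose]
    exact Nat.descFactorial_le_pow m k
  have h2 : c ≤ k * c.choose k := by
    have hsucc := Nat.add_one_mul_choose_eq (c - 1) (k - 1)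
    have hc' : c - 1 + 1 = c := by omega
    have hk' : k - 1 + 1 = k := by omega
    rw [hc', hk'] at hsucc
    have hpos : 1 ≤ (c - 1).choose (k - 1) := Nat.choose_pos (by omega)
    calc c = c * 1 := (Nat.mul_one c).symm
      _ ≤ c * (c - 1).choose (k - 1) := Nat.mul_le_mul_left c hpos
      _ = c.choose k * k := hsucc
      _ = k * c.choose k := Nat.mul_comm _ _
  have hnat : c * m.choose k * (k - 1).factorial ≤ m ^ k * c.choose k := by
    calc c * m.choose k * (k - 1).factorial
        ≤ (k * c.choose k) * m.choose k * (k - 1).factorial := by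
          exact Nat.mul_le_mul_right _ (Nat.mul_le_mul_right _ h2)
      _ = c.choose k * (m.choose k * (k * (k - 1).factorial)) := by ring
      _ = c.choose k * (m.choose k * k.factorial) := by rw [hfk]
      _ ≤ c.choose k * m ^ k := Nat.mul_le_mul_left _ h1
      _ = m ^ k * c.choose k := Nat.mul_comm _ _
  have hm0 : (0 : ℝ) < ((m : ℕ) : ℝ) ^ k := by
    have : 0 < m := by omega
    positivity
  have hck0 : (0 : ℝ) < (c.choose k : ℝ) := by
    exact_mod_cast Nat.choose_pos hkc
  have hfac0 : (0 : ℝ) < ((k - 1).factorial : ℝ) := by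
    exact_mod_cast Nat.factorial_pos _
  constructor
  · rw [div_le_div_iff₀ (by positivity) hfac0]
    have := (Nat.cast_le (α := ℝ)).mpr hnat
    push_cast at this ⊢
    nlinarith [this]
  · rw [div_le_one hfac0]
    exact_mod_cast Nat.one_le_iff_ne_zero.mpr (Nat.factorial_ne_zero _)
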